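/- arXiv:1409.4794 — 4 statements merged into one kernel-verified Lean document; each statement's English description precedes it below -/
import Mathlib

section
/- Let K ∈ ℕ, K ≥ 1, let f₁, …, f_K : ℂ → ℂ be entire functions of order at most 1, and let α₁, …, α_K ∈ ℂ be pairwise distinct. If ∑_{j=1}^{K} f_j(ξ)·exp(α_j·ξ²) = 0 for all ξ ∈ ℂ, then f₁ = f₂ = … = f_K = 0 identically. -/
open Complex

open Complex Set Filter

lemma strip_bound {g : ℂ → ℂ} (hg : Differentiable ℂ g) {C ε : ℝ} (hε : 0 < ε)
    (hgrow : ∀ z : ℂ, ‖g z‖ ≤ C * Real.exp (‖z‖ ^ (1 + ε)))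
    {a b M : ℝ} (hab : a < b) (hwidth : (1 + ε) * (b - a) < Real.pi)
    (ha : ∀ r : ℝ, ‖g (Complex.exp (r + a * Complex.I))‖ ≤ M)
    (hb : ∀ r : ℝ, ‖g (Complex.exp (r + b * Complex.I))‖ ≤ M) :
    ∀ z : ℂ, a ≤ z.im → z.im ≤ b → ‖g (Complex.exp z)‖ ≤ M := by
  intro z hza hzb
  have hC : 0 ≤ C := by
    have h0 := (norm_nonneg (g 0)).trans (hgrow 0)
    have := Real.exp_pos (‖(0:ℂ)‖ ^ (1 + ε))
    nlinarith
  have hfd : DiffContOnCl ℂ (fun w => g (Complex.exp w)) (Complex.im ⁻¹' Ioo a b) :=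
    (hg.comp Complex.differentiable_exp).diffContOnCl
  refine PhragmenLindelof.horizontal_strip (f := fun w => g (Complex.exp w)) hfd ?_ ?_ ?_ hza hzb
  · refine ⟨1 + ε, ?_, 1, ?_⟩
    · rw [lt_div_iff₀ (by linarith)]
      linarith [hwidth]
    · refine Asymptotics.IsBigO.of_bound C (Filter.Eventually.of_forall fun w => ?_)
      have h2 : (‖Complex.exp w‖) ^ (1 + ε) = Real.exp ((1 + ε) * w.re) := by
        rw [Complex.norm_exp, Real.rpow_def_of_pos (Real.exp_pos _), Real.log_exp, mul_comm]
      have h3 : (1 + ε) * w.re ≤ (1 + ε) * |w.re| := by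
        have : w.re ≤ |w.re| := le_abs_self _
        nlinarith
      calc ‖g (Complex.exp w)‖ ≤ C * Real.exp ((‖Complex.exp w‖) ^ (1 + ε)) :=
            hgrow _
        _ ≤ C * Real.exp (Real.exp ((1 + ε) * |w.re|)) := by
            rw [h2]; exact mul_le_mul_of_nonneg_left (Real.exp_le_exp.2 (Real.exp_le_exp.2 h3)) hC
        _ ≤ C * ‖Real.exp (1 * Real.exp ((1 + ε) * |w.re|))‖ := by
            rw [one_mul, Real.norm_eq_abs, abs_of_pos (Real.exp_pos _)]
  · intro w hw
    have : w = (w.re : ℂ) + a * Complex.I := by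
      conv_lhs => rw [← Complex.re_add_im w]
      rw [hw]
    rw [this]; exact ha w.re
  · intro w hw
    have : w = (w.re : ℂ) + b * Complex.I := by
      conv_lhs => rw [← Complex.re_add_im w]
      rw [hw]
    rw [this]; exact hb w.re

lemma bounded_of_rays {g : ℂ → ℂ} (hg : Differentiable ℂ g) {C ε : ℝ} (hε : 0 < ε)
    (hgrow : ∀ z : ℂ, ‖g z‖ ≤ C * Real.exp (‖z‖ ^ (1 + ε)))
    {t0 η M : ℝ} (hη0 : 0 < η) (hηπ : η < Real.pi / 2)
    (hwidth : (1 + ε) * (Real.pi - 2 * η) < Real.pi)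
    (hray : ∀ r t : ℝ, |t - t0| ≤ η →
      ‖g ((r : ℂ) * Complex.exp (t * Complex.I))‖ ≤ M) :
    ∀ ξ : ℂ, ‖g ξ‖ ≤ M := by
  have hπ := Real.pi_pos
  have hexp_split : ∀ z : ℂ, Complex.exp z = ((Real.exp z.re : ℝ) : ℂ) * Complex.exp (z.im * Complex.I) := by
    intro z
    rw [Complex.ofReal_exp, ← Complex.exp_add, Complex.re_add_im]
  have hshift : ∀ t : ℝ, Complex.exp ((t : ℂ) * Complex.I) = - Complex.exp (((t - Real.pi : ℝ) : ℂ) * Complex.I) := by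
    intro t
    have : (t : ℂ) * Complex.I = ((t - Real.pi : ℝ) : ℂ) * Complex.I + Real.pi * Complex.I := by
      push_cast; ring
    rw [this, Complex.exp_add, Complex.exp_pi_mul_I]; ring
  have hper : ∀ t : ℝ, Complex.exp ((t : ℂ) * Complex.I) = Complex.exp (((t - 2 * Real.pi : ℝ) : ℂ) * Complex.I) := by
    intro t
    have : (t : ℂ) * Complex.I = ((t - 2 * Real.pi : ℝ) : ℂ) * Complex.I + (2 * Real.pi) * Complex.I := by
      push_cast; ring
    rw [this, Complex.exp_add, Complex.exp_two_pi_mul_I, mul_one]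
  -- rays, reformulated in terms of `exp z`
  have hray2 : ∀ z : ℂ, (|z.im - t0| ≤ η ∨ |z.im - (t0 + Real.pi)| ≤ η ∨
      |z.im - (t0 + 2 * Real.pi)| ≤ η) → ‖g (Complex.exp z)‖ ≤ M := by
    intro z hz
    rw [hexp_split z]
    rcases hz with h | h | h
    · exact hray _ _ h
    · rw [hshift z.im]
      have : ((Real.exp z.re : ℝ) : ℂ) * -Complex.exp (((z.im - Real.pi : ℝ)) * Complex.I)
          = ((-Real.exp z.re : ℝ) : ℂ) * Complex.exp (((z.im - Real.pi : ℝ)) * Complex.I) := by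
        push_cast; ring
      rw [this]
      exact hray _ _ (by rw [abs_sub_comm] at h ⊢; rw [show t0 - (z.im - Real.pi) = t0 + Real.pi - z.im by ring]; exact h)
    · rw [hper z.im]
      exact hray _ _ (by rw [show z.im - 2*Real.pi - t0 = z.im - (t0 + 2*Real.pi) by ring]; exact h)
  -- the two strips
  have strip1 : ∀ z : ℂ, t0 + η ≤ z.im → z.im ≤ t0 + Real.pi - η →
      ‖g (Complex.exp z)‖ ≤ M := by
    have hab : t0 + η < t0 + Real.pi - η := by linarith
    have hw : (1 + ε) * ((t0 + Real.pi - η) - (t0 + η)) < Real.pi := by nlinarith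
    refine strip_bound hg hε hgrow hab hw ?_ ?_
    · intro r
      refine hray2 _ (Or.inl ?_)
      simp
      exact (abs_of_pos hη0).le
    · intro r
      refine hray2 _ (Or.inr (Or.inl ?_))
      simp
      exact (abs_of_pos hη0).le
  have strip2 : ∀ z : ℂ, t0 + Real.pi + η ≤ z.im → z.im ≤ t0 + 2 * Real.pi - η →
      ‖g (Complex.exp z)‖ ≤ M := by
    have hab : t0 + Real.pi + η < t0 + 2 * Real.pi - η := by linarith
    have hw : (1 + ε) * ((t0 + 2 * Real.pi - η) - (t0 + Real.pi + η)) < Real.pi := by nlinarith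
    refine strip_bound hg hε hgrow hab hw ?_ ?_
    · intro r
      refine hray2 _ (Or.inr (Or.inl ?_))
      simp
      exact (abs_of_pos hη0).le
    · intro r
      refine hray2 _ (Or.inr (Or.inr ?_))
      simp
      exact (abs_of_pos hη0).le
  -- assemble
  intro ξ
  rcases eq_or_ne ξ 0 with rfl | hξ
  · have := hray 0 t0 (by simp [hη0.le])
    simpa using this
  · set z0 := Complex.log ξ with hz0
    have hz0e : Complex.exp z0 = ξ := Complex.exp_log hξ
    set k : ℤ := ⌈(t0 - η - z0.im) / (2 * Real.pi)⌉ with hk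
    set z : ℂ := z0 + (2 * Real.pi * k : ℝ) * Complex.I with hzdef
    have hze : Complex.exp z = ξ := by
      rw [hzdef, Complex.exp_add, hz0e]
      have : ((2 * Real.pi * k : ℝ) : ℂ) * Complex.I = k * (2 * Real.pi * Complex.I) := by
        push_cast; ring
      rw [this, Complex.exp_int_mul_two_pi_mul_I, mul_one]
    have hzim : z.im = z0.im + 2 * Real.pi * k := by
      simp [hzdef]
    have hk1 : t0 - η ≤ z.im := by
      have := Int.le_ceil ((t0 - η - z0.im) / (2 * Real.pi))
      rw [div_le_iff₀ (by linarith)] at this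
      rw [hzim]; linarith
    have hk2 : z.im < t0 - η + 2 * Real.pi := by
      have h2π : (0:ℝ) < 2 * Real.pi := by linarith
      have hceil := Int.ceil_lt_add_one ((t0 - η - z0.im) / (2 * Real.pi))
      have h' : (k:ℝ) * (2 * Real.pi) < ((t0 - η - z0.im) / (2 * Real.pi) + 1) * (2 * Real.pi) :=
        mul_lt_mul_of_pos_right (by exact_mod_cast hceil) h2π
      rw [add_mul, div_mul_cancel₀ _ (ne_of_gt h2π), one_mul] at h'
      rw [hzim]; linarith
    rw [← hze]
    set t := z.im with htdef
    rcases le_or_gt t (t0 + η) with h1 | h1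
    · exact hray2 z (Or.inl (abs_le.2 ⟨by linarith, by linarith⟩))
    rcases le_or_gt t (t0 + Real.pi - η) with h2 | h2
    · exact strip1 z h1.le h2
    rcases le_or_gt t (t0 + Real.pi + η) with h3 | h3
    · exact hray2 z (Or.inr (Or.inl (abs_le.2 ⟨by linarith, by linarith⟩)))
    rcases le_or_gt t (t0 + 2 * Real.pi - η) with h4 | h4
    · exact strip2 z h3.le h4
    · linarith
open Complex Set Filter

lemma exists_generic_direction {n : ℕ} (s : Finset (Fin n)) (α : Fin n → ℂ)
    (hα : Function.Injective α) :
    ∃ ψ : ℝ, ∀ j ∈ s, ∀ k ∈ s, j ≠ k →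
      ((α j - α k) * Complex.exp ((ψ : ℂ) * Complex.I)).re ≠ 0 := by
  have hπ := Real.pi_pos
  -- the bad set of unit vectors for a single pair
  have hfin : ∀ β : ℂ, β ≠ 0 → {u : ℂ | ‖u‖ = 1 ∧ (β * u).re = 0}.Finite := by
    intro β hβ
    apply Set.Finite.subset (((Set.finite_singleton
      (-((‖β‖ : ℂ) * Complex.I / β))).insert ((‖β‖ : ℂ) * Complex.I / β)))
    rintro u ⟨habs, hre⟩
    have hw : β * u = ((β * u).im : ℂ) * Complex.I := by
      apply Complex.ext <;> simp [hre]
    have habs2 : |(β * u).im| = ‖β‖ := by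
      have h1 : ‖β * u‖ = ‖β‖ := by
        rw [norm_mul, habs, mul_one]
      rw [hw] at h1
      simp only [norm_mul, Complex.norm_real, Real.norm_eq_abs, Complex.norm_I, mul_one] at h1
      exact h1
    rw [Set.mem_insert_iff, Set.mem_singleton_iff]
    rcases abs_eq (norm_nonneg β) |>.1 habs2 with h | h
    · left
      rw [eq_div_iff hβ, mul_comm u β, hw, h]
    · right
      rw [eq_comm, neg_eq_iff_eq_neg, eq_comm, eq_div_iff hβ, mul_comm]
      have hbu : β * u = -(↑(‖β‖) * Complex.I) := by
        rw [hw, h]; push_cast; ring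
      rw [mul_neg, hbu, neg_neg]
  -- bad set over all pairs
  classical
  let T : Finset (Fin n × Fin n) := (s ×ˢ s).filter (fun p => p.1 ≠ p.2)
  have hbad : (⋃ p ∈ T, {u : ℂ | ‖u‖ = 1 ∧ ((α p.1 - α p.2) * u).re = 0}).Finite := by
    apply Set.Finite.biUnion T.finite_toSet
    intro p hp
    apply hfin
    have : p.1 ≠ p.2 := (Finset.mem_filter.1 hp).2
    exact sub_ne_zero.2 fun h => this (hα h)
  -- infinite family of unit vectors
  have hinj : Set.InjOn (fun ψ : ℝ => Complex.exp ((ψ : ℂ) * Complex.I)) (Set.Ico 0 (2 * Real.pi)) := by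
    intro a ha b hb hab
    simp only at hab
    rcases Complex.exp_eq_exp_iff_exists_int.1 hab with ⟨m, hm⟩
    have him : a = b + m * (2 * Real.pi) := by
      have := congrArg Complex.im hm
      push_cast at this
      simpa using this
    have hm0 : m = 0 := by
      rcases ha with ⟨ha0, ha2⟩; rcases hb with ⟨hb0, hb2⟩
      have h1 : ((m : ℝ)) * (2 * Real.pi) < 2 * Real.pi := by linarith
      have h2 : -(2 * Real.pi) < ((m : ℝ)) * (2 * Real.pi) := by linarith
      have hlt : (m:ℝ) < 1 := by nlinarith
      have hgt : (-1 : ℝ) < (m:ℝ) := by nlinarith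
      have hlt' : m < 1 := by exact_mod_cast hlt
      have hgt' : (-1:ℤ) < m := by exact_mod_cast hgt
      omega
    rw [hm0] at him; push_cast at him; linarith [him]
  have hIcoInf : (Set.Ico (0:ℝ) (2 * Real.pi)).Infinite := Set.Ico_infinite (by linarith)
  have himg : ((fun ψ : ℝ => Complex.exp ((ψ : ℂ) * Complex.I)) '' Set.Ico 0 (2 * Real.pi)).Infinite :=
    hIcoInf.image hinj
  obtain ⟨u, hu⟩ := (himg.diff hbad).nonempty
  obtain ⟨⟨ψ, hψmem, rfl⟩, hubad⟩ := hu
  refine ⟨ψ, fun j hj k hk hjk hre => hubad ?_⟩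
  simp only [Set.mem_iUnion]
  refine ⟨(j, k), ?_, ?_, hre⟩
  · exact Finset.mem_filter.2 ⟨Finset.mem_product.2 ⟨hj, hk⟩, hjk⟩
  · rw [Complex.norm_exp]
    simp

set_option maxHeartbeats 2000000 in
lemma fresnel_aux {K : ℕ} (f : Fin K → ℂ → ℂ)
    (hdiff : ∀ j, Differentiable ℂ (f j))
    (horder : ∀ j, ∀ ε : ℝ, 0 < ε → ∃ C : ℝ, 0 < C ∧
      ∀ z : ℂ, ‖f j z‖ ≤ C * Real.exp (‖z‖ ^ (1 + ε)))
    (α : Fin K → ℂ) (hα : Function.Injective α) :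
    ∀ s : Finset (Fin K),
      (∀ ξ : ℂ, ∑ j ∈ s, f j ξ * Complex.exp (α j * ξ ^ 2) = 0) →
      ∀ j ∈ s, f j = 0 := by
  intro s
  induction s using Finset.strongInduction with
  | _ s ih =>
    intro hsum0 j hj
    classical
    have hπ := Real.pi_pos
    have hsne : s.Nonempty := ⟨j, hj⟩
    obtain ⟨ψ, hψ⟩ := exists_generic_direction s α hα
    set u : ℂ := Complex.exp ((ψ : ℂ) * Complex.I) with hu
    set v : Fin K → ℝ := fun i => (α i * u).re with hv
    obtain ⟨j0, hj0s, hj0max⟩ := Finset.exists_max_image s v hsne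
    have hrev : ∀ i, ((α i - α j0) * u).re = v i - v j0 := by
      intro i; simp [hv, sub_mul, Complex.sub_re]
    have hstrict : ∀ i ∈ s, i ≠ j0 → v i < v j0 := by
      intro i hi hij
      refine lt_of_le_of_ne (hj0max i hi) fun h => ?_
      exact hψ i hi j0 hj0s hij (by rw [hrev i, h, sub_self])
    have hfj0 : f j0 = 0 := by
      set s' := s.erase j0 with hs'def
      by_cases hs'e : s' = ∅
      · funext ξ
        have h := hsum0 ξ
        rw [← Finset.sum_erase_add s _ hj0s, ← hs'def, hs'e, Finset.sum_empty, zero_add] at h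
        have := (mul_eq_zero.1 h).resolve_right (Complex.exp_ne_zero _)
        simpa using this
      have hs'ne : s'.Nonempty := Finset.nonempty_of_ne_empty hs'e
      obtain ⟨j1, hj1, hj1min⟩ := Finset.exists_min_image s' (fun i => v j0 - v i) hs'ne
      set δ0 : ℝ := v j0 - v j1 with hδ0def
      have hj1' := Finset.mem_erase.1 hj1
      have hδ0 : 0 < δ0 := sub_pos.2 (hstrict j1 hj1'.2 hj1'.1)
      have hgap : ∀ i ∈ s', v i - v j0 ≤ -δ0 := by
        intro i hi
        have := hj1min i hi
        linarith
      obtain ⟨j2, hj2, hj2max⟩ := Finset.exists_max_image s'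
        (fun i => ‖α i - α j0‖) hs'ne
      set B : ℝ := ‖α j2 - α j0‖ with hBdef
      have hB0 : 0 ≤ B := norm_nonneg _
      set η : ℝ := min (min (δ0 / (8 * (B + 1))) (1 / 8)) (Real.pi / 4) with hηdef
      have hη0 : 0 < η := by
        apply lt_min (lt_min _ (by norm_num)) (by linarith)
        positivity
      have hη8 : η ≤ 1 / 8 := le_trans (min_le_left _ _) (min_le_right _ _)
      have hηδ : η ≤ δ0 / (8 * (B + 1)) := le_trans (min_le_left _ _) (min_le_left _ _)
      have hηπ4 : η ≤ Real.pi / 4 := min_le_right _ _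
      have hηπ : η < Real.pi / 2 := by linarith
      set t0 : ℝ := ψ / 2 with ht0def
      -- exponent decay on the double sector
      have hsector : ∀ i ∈ s', ∀ t : ℝ, |t - t0| ≤ η →
          ((α i - α j0) * Complex.exp (((2 * t : ℝ) : ℂ) * Complex.I)).re ≤ -(δ0 / 2) := by
        intro i hi t ht
        set β : ℂ := α i - α j0 with hβdef
        have hβB : ‖β‖ ≤ B := hj2max i hi
        have hdiffexp : ‖Complex.exp (((2 * t : ℝ) : ℂ) * Complex.I) - u‖
            ≤ 4 * η := by
          have h1 : ((2 * t : ℝ) : ℂ) * Complex.I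
              = (ψ : ℂ) * Complex.I + ((2 * (t - t0) : ℝ) : ℂ) * Complex.I := by
            push_cast [ht0def]; ring
          rw [h1, Complex.exp_add, hu]
          have h2 : Complex.exp ((ψ : ℂ) * Complex.I) *
                Complex.exp (((2 * (t - t0) : ℝ) : ℂ) * Complex.I) -
                Complex.exp ((ψ : ℂ) * Complex.I)
              = Complex.exp ((ψ : ℂ) * Complex.I) *
                (Complex.exp (((2 * (t - t0) : ℝ) : ℂ) * Complex.I) - 1) := by ring
          rw [h2, norm_mul]
          have h3 : ‖Complex.exp ((ψ : ℂ) * Complex.I)‖ = 1 := by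
            rw [Complex.norm_exp]; simp
          rw [h3, one_mul]
          have h4 : ‖((2 * (t - t0) : ℝ) : ℂ) * Complex.I‖ = 2 * |t - t0| := by
            rw [norm_mul, Complex.norm_I, mul_one, Complex.norm_real, Real.norm_eq_abs, abs_mul]
            norm_num
          have h5 : ‖((2 * (t - t0) : ℝ) : ℂ) * Complex.I‖ ≤ 1 := by
            rw [h4]; linarith [ht, hη8]
          calc ‖Complex.exp (((2 * (t - t0) : ℝ) : ℂ) * Complex.I) - 1‖
              ≤ 2 * ‖((2 * (t - t0) : ℝ) : ℂ) * Complex.I‖ :=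
                Complex.norm_exp_sub_one_le h5
            _ = 4 * |t - t0| := by rw [h4]; ring
            _ ≤ 4 * η := by linarith
        have hsplit : (β * Complex.exp (((2 * t : ℝ) : ℂ) * Complex.I)).re
            = (β * u).re + (β * (Complex.exp (((2 * t : ℝ) : ℂ) * Complex.I) - u)).re := by
          rw [← Complex.add_re, ← mul_add]; ring_nf
        rw [hsplit]
        have hre2 : (β * (Complex.exp (((2 * t : ℝ) : ℂ) * Complex.I) - u)).re
            ≤ B * (4 * η) := by
          calc (β * (Complex.exp (((2 * t : ℝ) : ℂ) * Complex.I) - u)).re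
              ≤ ‖β * (Complex.exp (((2 * t : ℝ) : ℂ) * Complex.I) - u)‖ :=
                Complex.re_le_norm _
            _ = ‖β‖ * ‖Complex.exp (((2 * t : ℝ) : ℂ) * Complex.I) - u‖ :=
                norm_mul _ _
            _ ≤ B * (4 * η) := by
                apply mul_le_mul hβB hdiffexp (norm_nonneg _) hB0
        have hre1 : (β * u).re ≤ -δ0 := by rw [hβdef, hrev i]; exact hgap i hi
        have hBη : B * (4 * η) ≤ δ0 / 2 := by
          have h6 : (B + 1) * η ≤ δ0 / 8 := by
            rw [hηdef]
            calc (B + 1) * min (min (δ0 / (8 * (B + 1))) (1 / 8)) (Real.pi / 4)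
                ≤ (B + 1) * (δ0 / (8 * (B + 1))) := by
                  apply mul_le_mul_of_nonneg_left _ (by linarith)
                  exact le_trans (min_le_left _ _) (min_le_left _ _)
              _ = δ0 / 8 := by field_simp
          nlinarith
        linarith
      set ε : ℝ := η / Real.pi with hεdef
      have hε : 0 < ε := div_pos hη0 hπ
      have hε14 : ε ≤ 1 / 4 := by
        rw [hεdef, div_le_iff₀ hπ]
        linarith
      have hwidth : (1 + ε) * (Real.pi - 2 * η) < Real.pi := by
        rw [hεdef]
        have : η / Real.pi * Real.pi = η := div_mul_cancel₀ η (ne_of_gt hπ)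
        nlinarith [hη0, hηπ, sq_nonneg η]
      choose Cc hCpos hCb using fun i => horder i ε hε
      set Csum : ℝ := ∑ i ∈ s', Cc i with hCsumdef
      have hCsumpos : 0 < Csum := Finset.sum_pos (fun i _ => hCpos i) hs'ne
      set δ : ℝ := δ0 / 2 with hδdef
      have hδpos : 0 < δ := by rw [hδdef]; linarith
      set R : ℝ := max 1 ((2 / δ) * (2 / δ)) with hRdef
      have hR1 : 1 ≤ R := le_max_left _ _
      have hpow : ∀ x : ℝ, R ≤ x → x ^ ((1 : ℝ) + ε) ≤ δ / 2 * x ^ 2 := by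
        intro x hx
        have hx1 : 1 ≤ x := le_trans hR1 hx
        have hx0 : 0 < x := by linarith
        have h1 : x ^ ((1 : ℝ) + ε) ≤ x ^ ((3 : ℝ) / 2) :=
          Real.rpow_le_rpow_of_exponent_le hx1 (by linarith)
        have h2 : x ^ ((3 : ℝ) / 2) = x * Real.sqrt x := by
          rw [show (3 : ℝ) / 2 = 1 + 1 / 2 by norm_num, Real.rpow_add hx0,
            Real.rpow_one, ← Real.sqrt_eq_rpow]
        have hsx : 2 / δ ≤ Real.sqrt x := by
          rw [show (2 : ℝ) / δ = Real.sqrt ((2 / δ) * (2 / δ)) from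
            (Real.sqrt_mul_self (by positivity)).symm]
          exact Real.sqrt_le_sqrt (le_trans (le_max_right _ _) hx)
        have hss : Real.sqrt x * Real.sqrt x = x := Real.mul_self_sqrt (by linarith)
        have hδ2 : 0 < 2 / δ := by positivity
        have hsqx : 0 < Real.sqrt x := by nlinarith
        have hsx' : 2 ≤ δ * Real.sqrt x := by
          rw [div_le_iff₀ hδpos] at hsx
          linarith [hsx]
        have : Real.sqrt x ≤ δ / 2 * x := by nlinarith [hss, hsx', hsqx]
        calc x ^ ((1 : ℝ) + ε) ≤ x * Real.sqrt x := by rw [← h2]; exact h1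
          _ ≤ x * (δ / 2 * x) := mul_le_mul_of_nonneg_left this hx0.le
          _ = δ / 2 * x ^ 2 := by ring
      have hsmall : ∀ x : ℝ, 0 ≤ x → x ≤ R → x ^ ((1 : ℝ) + ε) ≤ R * R := by
        intro x hx0 hxR
        rcases le_or_gt x 1 with h | h
        · calc x ^ ((1 : ℝ) + ε) ≤ 1 := Real.rpow_le_one hx0 h (by linarith)
            _ ≤ R * R := by nlinarith
        · calc x ^ ((1 : ℝ) + ε) ≤ x ^ ((2 : ℝ)) :=
              Real.rpow_le_rpow_of_exponent_le h.le (by linarith)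
            _ = x * x := by
                rw [show ((2 : ℝ)) = ((2 : ℕ) : ℝ) by norm_num, Real.rpow_natCast]
                ring
            _ ≤ R * R := by nlinarith
      -- the decay estimate on the double sector
      have hdecay : ∀ r t : ℝ, |t - t0| ≤ η →
          ‖f j0 ((r : ℂ) * Complex.exp ((t : ℂ) * Complex.I))‖
            ≤ Csum * (Real.exp (|r| ^ ((1 : ℝ) + ε)) * Real.exp (-δ * r ^ 2)) := by
        intro r t ht
        set ξ : ℂ := (r : ℂ) * Complex.exp ((t : ℂ) * Complex.I) with hξdef
        have habsξ : ‖ξ‖ = |r| := by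
          rw [hξdef, norm_mul, Complex.norm_real, Real.norm_eq_abs, Complex.norm_exp]
          simp
        have hξsq : ξ ^ 2 = ((r ^ 2 : ℝ) : ℂ) * Complex.exp (((2 * t : ℝ) : ℂ) * Complex.I) := by
          rw [hξdef, mul_pow, ← Complex.exp_nat_mul]
          push_cast
          ring_nf
        have e1 : f j0 ξ * Complex.exp (α j0 * ξ ^ 2)
            = -∑ i ∈ s', f i ξ * Complex.exp (α i * ξ ^ 2) := by
          have h := hsum0 ξ
          rw [← Finset.sum_erase_add s _ hj0s] at h
          exact eq_neg_of_add_eq_zero_right h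
        have e2 : f j0 ξ = -∑ i ∈ s', f i ξ * Complex.exp ((α i - α j0) * ξ ^ 2) := by
          calc f j0 ξ = f j0 ξ * Complex.exp (α j0 * ξ ^ 2)
                * Complex.exp (-(α j0 * ξ ^ 2)) := by
                rw [mul_assoc, ← Complex.exp_add, add_neg_cancel, Complex.exp_zero, mul_one]
            _ = (-∑ i ∈ s', f i ξ * Complex.exp (α i * ξ ^ 2))
                * Complex.exp (-(α j0 * ξ ^ 2)) := by rw [e1]
            _ = -∑ i ∈ s', f i ξ * Complex.exp ((α i - α j0) * ξ ^ 2) := by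
                rw [neg_mul, Finset.sum_mul, neg_inj]
                refine Finset.sum_congr rfl fun i hi => ?_
                rw [mul_assoc, ← Complex.exp_add]
                congr 2
                ring
        have hterm : ∀ i ∈ s', ‖f i ξ * Complex.exp ((α i - α j0) * ξ ^ 2)‖
            ≤ Cc i * (Real.exp (|r| ^ ((1 : ℝ) + ε)) * Real.exp (-δ * r ^ 2)) := by
          intro i hi
          rw [norm_mul, Complex.norm_exp]
          have h1 : ‖f i ξ‖ ≤ Cc i * Real.exp (|r| ^ ((1 : ℝ) + ε)) := by
            have := hCb i ξ
            rwa [habsξ] at this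
          have h2 : ((α i - α j0) * ξ ^ 2).re ≤ -δ * r ^ 2 := by
            rw [hξsq, show (α i - α j0) * (((r ^ 2 : ℝ) : ℂ)
                * Complex.exp (((2 * t : ℝ) : ℂ) * Complex.I))
              = ((r ^ 2 : ℝ) : ℂ) * ((α i - α j0)
                * Complex.exp (((2 * t : ℝ) : ℂ) * Complex.I)) from by ring,
              Complex.re_ofReal_mul]
            have := hsector i hi t ht
            have h3 : r ^ 2 * ((α i - α j0) * Complex.exp (((2 * t : ℝ) : ℂ) * Complex.I)).re
                ≤ r ^ 2 * (-(δ0 / 2)) := mul_le_mul_of_nonneg_left this (sq_nonneg r)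
            rw [hδdef]
            linarith
          calc ‖f i ξ‖ * Real.exp (((α i - α j0) * ξ ^ 2).re)
              ≤ (Cc i * Real.exp (|r| ^ ((1 : ℝ) + ε))) * Real.exp (-δ * r ^ 2) := by
                apply mul_le_mul h1 (Real.exp_le_exp.2 h2) (Real.exp_pos _).le
                exact mul_nonneg (hCpos i).le (Real.exp_pos _).le
            _ = Cc i * (Real.exp (|r| ^ ((1 : ℝ) + ε)) * Real.exp (-δ * r ^ 2)) := by ring
        calc ‖f j0 ξ‖
            = ‖∑ i ∈ s', f i ξ * Complex.exp ((α i - α j0) * ξ ^ 2)‖ := by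
              rw [e2, norm_neg]
          _ ≤ ∑ i ∈ s', ‖f i ξ * Complex.exp ((α i - α j0) * ξ ^ 2)‖ :=
              norm_sum_le _ _
          _ ≤ ∑ i ∈ s', Cc i * (Real.exp (|r| ^ ((1 : ℝ) + ε)) * Real.exp (-δ * r ^ 2)) :=
              Finset.sum_le_sum hterm
          _ = Csum * (Real.exp (|r| ^ ((1 : ℝ) + ε)) * Real.exp (-δ * r ^ 2)) := by
              rw [hCsumdef, ← Finset.sum_mul]

      set M : ℝ := Csum * Real.exp (R * R) with hMdef
      have hray : ∀ r t : ℝ, |t - t0| ≤ η →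
          ‖f j0 ((r : ℂ) * Complex.exp ((t : ℂ) * Complex.I))‖ ≤ M := by
        intro r t ht
        refine (hdecay r t ht).trans ?_
        rw [hMdef]
        apply mul_le_mul_of_nonneg_left _ hCsumpos.le
        rw [← Real.exp_add]
        apply Real.exp_le_exp.2
        rcases le_or_gt |r| R with h | h
        · have h4 := hsmall |r| (abs_nonneg r) h
          nlinarith [mul_nonneg hδpos.le (sq_nonneg r)]
        · have h4 := hpow |r| h.le
          rw [_root_.sq_abs] at h4
          nlinarith [mul_nonneg hδpos.le (sq_nonneg r), hR1]
      have hbd : Bornology.IsBounded (Set.range (f j0)) := by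
        rw [isBounded_iff_forall_norm_le]
        refine ⟨M, ?_⟩
        rintro x ⟨ζ, rfl⟩
        exact bounded_of_rays (hdiff j0) hε (hCb j0) hη0 hηπ hwidth hray ζ
      have hconst : ∀ ξ ζ : ℂ, f j0 ξ = f j0 ζ := fun ξ ζ =>
        (hdiff j0).apply_eq_apply_of_bounded hbd ξ ζ
      funext ξ
      show f j0 ξ = 0
      have hzero : ∀ m : ℕ, ‖f j0 ξ‖ ≤ Csum * Real.exp (-(δ / 2)) ^ m := by
        intro m
        set rr : ℝ := R + m with hrrdef
        have hrr : R ≤ rr := by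
          rw [hrrdef]; exact le_add_of_nonneg_right (Nat.cast_nonneg m : (0:ℝ) ≤ (m:ℝ))
        have hrrpos : 0 < rr := lt_of_lt_of_le (lt_of_lt_of_le one_pos hR1) hrr
        have h1 := hdecay rr t0 (by simpa using hη0.le)
        have habs : |rr| = rr := abs_of_pos hrrpos
        have h2 : |rr| ^ ((1 : ℝ) + ε) ≤ δ / 2 * rr ^ 2 := by
          rw [habs]; exact hpow rr hrr
        have h3 : Real.exp (|rr| ^ ((1 : ℝ) + ε)) * Real.exp (-δ * rr ^ 2)
            ≤ Real.exp (-(δ / 2)) ^ m := by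
          rw [← Real.exp_add, ← Real.exp_nat_mul]
          apply Real.exp_le_exp.2
          have h5 : (m : ℝ) ≤ rr ^ 2 := by
            rw [hrrdef]; nlinarith [hR1, (Nat.cast_nonneg m : (0:ℝ) ≤ (m:ℝ))]
          have h6 : δ / 2 * (m : ℝ) ≤ δ / 2 * rr ^ 2 :=
            mul_le_mul_of_nonneg_left h5 (le_of_lt (half_pos hδpos))
          linarith
        calc ‖f j0 ξ‖
            = ‖f j0 ((rr : ℂ) * Complex.exp ((t0 : ℂ) * Complex.I))‖ := by
              rw [hconst ξ ((rr : ℂ) * Complex.exp ((t0 : ℂ) * Complex.I))]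
          _ ≤ Csum * (Real.exp (|rr| ^ ((1 : ℝ) + ε)) * Real.exp (-δ * rr ^ 2)) := h1
          _ ≤ Csum * Real.exp (-(δ / 2)) ^ m := mul_le_mul_of_nonneg_left h3 hCsumpos.le
      have htend : Filter.Tendsto (fun m : ℕ => Csum * Real.exp (-(δ / 2)) ^ m)
          Filter.atTop (nhds 0) := by
        have h0 : (0 : ℝ) ≤ Real.exp (-(δ / 2)) := (Real.exp_pos _).le
        have h1 : Real.exp (-(δ / 2)) < 1 := Real.exp_lt_one_iff.2 (by linarith)
        have := (tendsto_pow_atTop_nhds_zero_of_lt_one h0 h1).const_mul Csum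
        simpa using this
      have hle0 : ‖f j0 ξ‖ ≤ 0 :=
        ge_of_tendsto' htend hzero
      exact norm_eq_zero.1 (le_antisymm hle0 (norm_nonneg _))

    rcases eq_or_ne j j0 with rfl | hne
    · exact hfj0
    · refine ih (s.erase j0) (Finset.erase_ssubset hj0s) ?_ j (Finset.mem_erase.2 ⟨hne, hj⟩)
      intro ξ
      have h := hsum0 ξ
      rw [← Finset.sum_erase_add s _ hj0s, hfj0] at h
      simpa using h


/-- **Linear independence of Fresnel factors** (Lemma 2 of the paper): if entire functions
`f j` of order at most 1 satisfy `∑ j, f j ξ · exp (α j · ξ²) = 0` for pairwise distinct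
`α j`, then all `f j` vanish identically. -/
theorem linear_independence_fresnel_factors
    (K : ℕ) (hK : 1 ≤ K) (f : Fin K → ℂ → ℂ)
    (hdiff : ∀ j, Differentiable ℂ (f j))
    (horder : ∀ j, ∀ ε : ℝ, 0 < ε → ∃ C : ℝ, 0 < C ∧
      ∀ z : ℂ, ‖f j z‖ ≤ C * Real.exp (‖z‖ ^ (1 + ε)))
    (α : Fin K → ℂ) (hα : Function.Injective α)
    (hsum : ∀ ξ : ℂ, ∑ j : Fin K, f j ξ * Complex.exp (α j * ξ ^ 2) = 0) :
    ∀ j, f j = 0 := by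
  intro j
  exact fresnel_aux f hdiff horder α hα Finset.univ (fun ξ => hsum ξ) j (Finset.mem_univ j)
end

section
/- Let K ∈ ℕ, K ≥ 1, and let α₁, …, α_K ∈ ℂ be pairwise distinct. Let j₀ ∈ {1, …, K} be an index with |α_{j₀}| ≥ |α_j| for all j, and assume α_{j₀} ≠ 0; write φ for the argument of α_{j₀} (so α_{j₀} = |α_{j₀}|·e^{iφ}). Then there exists ε > 0 such that for all j ≠ j₀ and all r ∈ ℝ, setting ξ = r·exp(−iφ/2), one has |exp(α_j·ξ²)| ≤ exp(−2ε·r²)·|exp(α_{j₀}·ξ²)|. -/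
open Complex

/-- **Super-exponential domination along the diagonal** (estimate in the proof of Lemma 2
of the paper): for pairwise distinct `α j` with `|α j₀|` maximal and `α j₀ ≠ 0`, with
`φ = arg (α j₀)`, there is `ε > 0` such that along `ξ = r·exp(−iφ/2)` each
`|exp(α j ξ²)|`, `j ≠ j₀`, is dominated by `exp(−2εr²)·|exp(α j₀ ξ²)|`. -/
theorem fresnel_diagonal_domination
    (K : ℕ) (hK : 1 ≤ K) (α : Fin K → ℂ) (hinj : Function.Injective α)
    (j₀ : Fin K) (hmax : ∀ j, ‖α j‖ ≤ ‖α j₀‖)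
    (hne : α j₀ ≠ 0) :
    ∃ ε : ℝ, 0 < ε ∧ ∀ j : Fin K, j ≠ j₀ → ∀ r : ℝ,
      ‖Complex.exp (α j * ((r : ℂ) * Complex.exp (-Complex.I * ((α j₀).arg : ℂ) / 2)) ^ 2)‖
        ≤ Real.exp (-2 * ε * r ^ 2) *
          ‖Complex.exp (α j₀ * ((r : ℂ) * Complex.exp (-Complex.I * ((α j₀).arg : ℂ) / 2)) ^ 2)‖ := by
  set φ : ℝ := (α j₀).arg with hφ
  set z : Fin K → ℂ := fun j => α j * Complex.exp (-Complex.I * (φ : ℂ)) with hzdef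
  have hz0 : z j₀ = (‖α j₀‖ : ℂ) := by
    have h := Complex.norm_mul_exp_arg_mul_I (α j₀)
    simp only [hzdef]
    rw [← h]
    rw [mul_assoc, ← Complex.exp_add]
    rw [← hφ]
    ring_nf
    simp
  have key : ∀ j : Fin K, j ≠ j₀ → (z j).re < ‖α j₀‖ := by
    intro j hj
    have habs : ‖z j‖ = ‖α j‖ := by
      simp [hzdef, Complex.norm_exp]
    have h1 : (z j).re ≤ ‖α j₀‖ := by
      calc (z j).re ≤ ‖z j‖ := Complex.re_le_norm _
        _ = ‖α j‖ := habs
        _ ≤ _ := hmax j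
    rcases lt_or_eq_of_le h1 with h | h
    · exact h
    · exfalso
      have h2 : ‖z j‖ ≤ ‖α j₀‖ := habs ▸ hmax j
      have h3 : (z j).re = ‖z j‖ :=
        le_antisymm (Complex.re_le_norm _) (h ▸ h2)
      have him : (z j).im = 0 := by
        have := Complex.sq_norm (z j)
        rw [Complex.normSq_apply, ← h3] at this
        nlinarith [sq_nonneg (z j).im]
      have hzeq : z j = (‖α j₀‖ : ℂ) := by
        apply Complex.ext
        · simpa using h
        · simpa using him
      have h4 : α j = z j * Complex.exp (Complex.I * (φ : ℂ)) := by
        simp only [hzdef]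
        rw [mul_assoc, ← Complex.exp_add]
        ring_nf
        simp
      rw [hzeq] at h4
      have h5 : ((‖α j₀‖) : ℂ) * Complex.exp (Complex.I * (φ : ℂ)) = α j₀ := by
        rw [mul_comm Complex.I]
        exact Complex.norm_mul_exp_arg_mul_I (α j₀)
      exact hj (hinj (h4.trans h5))
  by_cases hS : (Finset.univ.filter (· ≠ j₀) : Finset (Fin K)).Nonempty
  · set m : ℝ := (Finset.univ.filter (· ≠ j₀)).inf' hS (fun j => ‖α j₀‖ - (z j).re) with hm
    have hmpos : 0 < m := by
      rw [hm, Finset.lt_inf'_iff]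
      intro j hjmem
      have hj : j ≠ j₀ := (Finset.mem_filter.mp hjmem).2
      linarith [key j hj]
    refine ⟨m / 4, by positivity, ?_⟩
    intro j hj r
    have hmj : m ≤ ‖α j₀‖ - (z j).re := by
      rw [hm]
      exact Finset.inf'_le _ (Finset.mem_filter.mpr ⟨Finset.mem_univ j, hj⟩)
    have hsq : ∀ k : Fin K,
        α k * ((r : ℂ) * Complex.exp (-Complex.I * (φ : ℂ) / 2)) ^ 2 = ((r ^ 2 : ℝ) : ℂ) * z k := by
      intro k
      simp only [hzdef]
      rw [mul_pow, sq (Complex.exp _), ← Complex.exp_add]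
      push_cast
      ring_nf
    rw [hsq j, hsq j₀, Complex.norm_exp, Complex.norm_exp, Complex.re_ofReal_mul,
      Complex.re_ofReal_mul, ← Real.exp_add]
    apply Real.exp_le_exp.mpr
    have hz0re : (z j₀).re = ‖α j₀‖ := by rw [hz0]; simp
    rw [hz0re]
    nlinarith [sq_nonneg r]
  · refine ⟨1, one_pos, ?_⟩
    intro j hj r
    exact (hS ⟨j, by simp [hj]⟩).elim
end

section
/- Let a, ã, b : ℂ → ℂ be entire functions of order at most 1 with b not identically zero, let α ∈ ℂ with Im α ≠ 0, and let s ∈ {0, 1}. If for all z ∈ ℂ one has b*(z)·(a(z) − ã(z))·exp(conj(α)·z²) + b(z)·(a*(z) − ã*(z))·exp(α·z²) + s·(a*(z)·a(z) − ã*(z)·ã(z)) = 0, then a = ã identically. -/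
open Complex

/-- Schwarz reflection of an entire function is entire. -/
lemma reflDiff {f : ℂ → ℂ} (hf : Differentiable ℂ f) :
    Differentiable ℂ (fun z => (starRingEnd ℂ) (f ((starRingEnd ℂ) z))) := by
  intro z
  have h := (hf ((starRingEnd ℂ) z)).hasDerivAt
  have hc : HasDerivAt (fun w => (starRingEnd ℂ) (f ((starRingEnd ℂ) w)))
      ((starRingEnd ℂ) (deriv f ((starRingEnd ℂ) z))) z := by
    rw [hasDerivAt_iff_tendsto] at h ⊢
    have hconj : Filter.Tendsto (starRingEnd ℂ) (nhds z) (nhds ((starRingEnd ℂ) z)) :=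
      (continuous_conj).tendsto z
    have := h.comp hconj
    refine this.congr fun w => ?_
    simp only [Function.comp_apply, smul_eq_mul]
    have e1 : ‖(starRingEnd ℂ) w - (starRingEnd ℂ) z‖ = ‖w - z‖ := by
      rw [← map_sub, Complex.norm_conj]
    have e2 : (starRingEnd ℂ) (f ((starRingEnd ℂ) w)) - (starRingEnd ℂ) (f ((starRingEnd ℂ) z)) -
        (w - z) * (starRingEnd ℂ) (deriv f ((starRingEnd ℂ) z))
        = (starRingEnd ℂ) (f ((starRingEnd ℂ) w) - f ((starRingEnd ℂ) z) -
            ((starRingEnd ℂ) w - (starRingEnd ℂ) z) * deriv f ((starRingEnd ℂ) z)) := by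
      simp only [map_sub, map_mul, Complex.conj_conj]
    simp only [e1, e2, Complex.norm_conj]
  exact hc.differentiableAt

/-- An elementary bound: a power of exponent `1 + ε < 2` is eventually dominated by
`δ r ^ 2`. -/
lemma rpow_tail (C δ ε : ℝ) (hC : 0 < C) (hδ : 0 < δ) (hε : 0 < ε) (hε1 : ε ≤ 1/2) :
    ∃ K : ℝ, 0 ≤ K ∧ ∀ r : ℝ, 0 ≤ r → C * r ^ (1+ε) ≤ δ * r^2 + K := by
  set R : ℝ := max 1 ((C/δ) ^ (1/(1-ε))) with hR
  have hR1 : (1:ℝ) ≤ R := le_max_left _ _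
  have hR0 : (0:ℝ) < R := lt_of_lt_of_le one_pos hR1
  refine ⟨C * R^2, by positivity, fun r hr => ?_⟩
  rcases le_total r R with h | h
  · have h1 : r ^ (1+ε) ≤ R ^ (1+ε) := Real.rpow_le_rpow hr h (by linarith)
    have h2 : R ^ (1+ε) ≤ R ^ ((2:ℝ)) :=
      Real.rpow_le_rpow_of_exponent_le hR1 (by linarith)
    have h3 : R ^ ((2:ℝ)) = R ^ 2 := by
      rw [show ((2:ℝ)) = ((2:ℕ):ℝ) by norm_num, Real.rpow_natCast]
    have h4 : C * r ^ (1+ε) ≤ C * R ^ 2 := by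
      rw [← h3]
      exact mul_le_mul_of_nonneg_left (h1.trans h2) hC.le
    nlinarith [mul_nonneg hδ.le (sq_nonneg r)]
  · have hr1 : (1:ℝ) ≤ r := hR1.trans h
    have hr0 : (0:ℝ) < r := lt_of_lt_of_le one_pos hr1
    have key : C ≤ δ * r ^ (1-ε) := by
      have h1 : (C/δ) ^ ((1/(1-ε)) * (1-ε)) ≤ r ^ (1-ε) := by
        rw [Real.rpow_mul (by positivity)]
        exact Real.rpow_le_rpow (Real.rpow_nonneg (by positivity) _)
          ((le_max_right _ _).trans h) (by linarith)
      rw [one_div_mul_cancel (by linarith : (1:ℝ) - ε ≠ 0), Real.rpow_one] at h1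
      calc C = δ * (C/δ) := by field_simp
      _ ≤ δ * r ^ (1-ε) := mul_le_mul_of_nonneg_left h1 hδ.le
    have h2 : C * r ^ (1+ε) ≤ δ * r ^ (1-ε) * r ^ (1+ε) :=
      mul_le_mul_of_nonneg_right key (Real.rpow_nonneg hr0.le _)
    have h3 : r ^ ((1:ℝ)-ε) * r ^ ((1:ℝ)+ε) = r ^ 2 := by
      rw [← Real.rpow_add hr0]
      norm_num
    have hK : 0 ≤ C * R^2 := by positivity
    nlinarith [h2, h3]

/-- If a product of an entire function with a continuous function vanishes identically and
the second factor is nonzero somewhere, the first factor vanishes identically. -/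
lemma mul_zero_forall {f g : ℂ → ℂ} (hf : Differentiable ℂ f) (hgc : Continuous g)
    (h : ∀ z, f z * g z = 0) {z₁ : ℂ} (hz : g z₁ ≠ 0) : ∀ z, f z = 0 := by
  have hev : ∀ᶠ w in nhds z₁, f w = 0 := by
    filter_upwards [hgc.continuousAt.eventually_ne hz] with w hw
    rcases mul_eq_zero.1 (h w) with h' | h'
    · exact h'
    · exact absurd h' hw
  have hA : AnalyticOnNhd ℂ f Set.univ := (analyticOnNhd_univ_iff_differentiable).2 hf
  have := hA.eqOn_zero_of_preconnected_of_eventuallyEq_zero isPreconnected_univ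
    (Set.mem_univ z₁) hev
  exact fun z => this (Set.mem_univ z)

set_option maxHeartbeats 1000000 in
/-- **Borel-type linear independence.** If entire `F, G, K` of order at most one satisfy
`F·exp(conj α·z²) + G·exp(α·z²) + K = 0` with `Im α > 0`, then `F ≡ 0`. -/
lemma aux_zero (F G K : ℂ → ℂ) (hF : Differentiable ℂ F)
    (hord : ∀ ε : ℝ, 0 < ε → ∃ C : ℝ, 0 < C ∧ ∀ z : ℂ,
      ‖F z‖ ≤ C * Real.exp (C * ‖z‖ ^ (1+ε)) ∧
      ‖G z‖ ≤ C * Real.exp (C * ‖z‖ ^ (1+ε)) ∧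
      ‖K z‖ ≤ C * Real.exp (C * ‖z‖ ^ (1+ε)))
    (α : ℂ) (hv : 0 < α.im)
    (heq : ∀ z : ℂ, F z * Complex.exp ((starRingEnd ℂ) α * z^2)
      + G z * Complex.exp (α * z^2) + K z = 0) :
    ∀ z, F z = 0 := by
  set u : ℝ := α.re with hu
  set v : ℝ := α.im with hvdef
  set η : ℝ := min (Real.pi/6) (v/(4*(|u|+1))) with hη
  set δ : ℝ := v/4 with hδdef
  have hπ : (0:ℝ) < Real.pi := Real.pi_pos
  have hη0 : 0 < η := lt_min (by positivity) (by positivity)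
  have hη6 : η ≤ Real.pi/6 := min_le_left _ _
  have hηu : η ≤ v/(4*(|u|+1)) := min_le_right _ _
  have hδ0 : 0 < δ := by rw [hδdef]; positivity
  set ε : ℝ := min (η/(2*Real.pi)) (1/2) with hε
  have hε0 : 0 < ε := lt_min (by positivity) (by norm_num)
  have hε12 : ε ≤ 1/2 := min_le_right _ _
  have hεη : ε ≤ η/(2*Real.pi) := min_le_left _ _
  obtain ⟨C, hC0, hCb⟩ := hord ε hε0
  obtain ⟨K₀, hK₀0, hK₀⟩ := rpow_tail C δ ε hC0 hδ0 hε0 hε12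
  set M : ℝ := 2*C*Real.exp K₀ with hM
  have hM0 : 0 < M := by positivity
  have hCF : ∀ z : ℂ, ‖F z‖ ≤ C * Real.exp (C * ‖z‖ ^ (1+ε)) :=
    fun z => (hCb z).1
  -- decay estimate on good rays
  have ray : ∀ z : ℂ, δ * ‖z‖ ^ 2 ≤ 2 * v * (z^2).im →
      δ * ‖z‖ ^ 2 ≤ ((starRingEnd ℂ) α * z ^ 2).re →
      ‖F z‖ ≤ 2*C*Real.exp (C * ‖z‖ ^ (1+ε) - δ * ‖z‖ ^ 2) := by
    intro z h1 h2
    have hE : Complex.exp ((starRingEnd ℂ) α * z^2) ≠ 0 := Complex.exp_ne_zero _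
    have hFz : F z = -(G z * Complex.exp (α*z^2 - (starRingEnd ℂ) α * z^2))
        - K z * Complex.exp (-((starRingEnd ℂ) α * z^2)) := by
      have key : F z * Complex.exp ((starRingEnd ℂ) α * z^2)
          = (-(G z * Complex.exp (α*z^2 - (starRingEnd ℂ) α * z^2))
            - K z * Complex.exp (-((starRingEnd ℂ) α * z^2)))
            * Complex.exp ((starRingEnd ℂ) α * z^2) := by
        rw [sub_mul, neg_mul, mul_assoc, mul_assoc, ← Complex.exp_add, ← Complex.exp_add,
          sub_add_cancel, neg_add_cancel, Complex.exp_zero, mul_one]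
        linear_combination heq z
      exact mul_right_cancel₀ hE key
    have habs : ‖F z‖ ≤
        ‖G z‖ * Real.exp ((α*z^2 - (starRingEnd ℂ) α * z^2).re)
        + ‖K z‖ * Real.exp ((-((starRingEnd ℂ) α * z^2)).re) := by
      rw [hFz]
      refine (norm_sub_le _ _).trans ?_
      simp [Complex.norm_exp]
    have hre1 : (α*z^2 - (starRingEnd ℂ) α * z^2).re = 2 * v * (z^2).im * (-1) + 0 := by
      simp [Complex.sub_re, Complex.mul_re, Complex.conj_re, Complex.conj_im, hvdef]
      ring
    have hre1' : (α*z^2 - (starRingEnd ℂ) α * z^2).re ≤ -(δ * ‖z‖ ^ 2) := by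
      rw [hre1]; linarith
    have hre2 : (-((starRingEnd ℂ) α * z^2)).re ≤ -(δ * ‖z‖ ^ 2) := by
      rw [Complex.neg_re]; linarith
    have hG := (hCb z).2.1
    have hK := (hCb z).2.2
    calc ‖F z‖ ≤
        ‖G z‖ * Real.exp ((α*z^2 - (starRingEnd ℂ) α * z^2).re)
        + ‖K z‖ * Real.exp ((-((starRingEnd ℂ) α * z^2)).re) := habs
      _ ≤ (C * Real.exp (C * ‖z‖ ^ (1+ε))) * Real.exp (-(δ * ‖z‖ ^ 2))
        + (C * Real.exp (C * ‖z‖ ^ (1+ε))) * Real.exp (-(δ * ‖z‖ ^ 2)) := by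
          gcongr <;> first
            | exact norm_nonneg _
            | exact Real.exp_le_exp.2 hre1'
            | exact Real.exp_le_exp.2 hre2
      _ = 2*C*Real.exp (C * ‖z‖ ^ (1+ε) - δ * ‖z‖ ^ 2) := by
          have e : Real.exp (C * ‖z‖ ^ (1+ε)) * Real.exp (-(δ * ‖z‖ ^ 2))
              = Real.exp (C * ‖z‖ ^ (1+ε) - δ * ‖z‖ ^ 2) := by
            rw [← Real.exp_add]; ring_nf
          rw [mul_assoc, e]; ring
  have rayM : ∀ z : ℂ, δ * ‖z‖ ^ 2 ≤ 2 * v * (z^2).im →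
      δ * ‖z‖ ^ 2 ≤ ((starRingEnd ℂ) α * z ^ 2).re →
      ‖F z‖ ≤ M := by
    intro z h1 h2
    refine (ray z h1 h2).trans ?_
    rw [hM]
    have := hK₀ (‖z‖) (norm_nonneg z)
    gcongr
    linarith
  -- Phragmen–Lindelöf on strips (sectors, via the exponential map)
  have strip : ∀ θa θb : ℝ, 0 < θb - θa → θb - θa ≤ Real.pi - η →
      δ ≤ 2*v*Real.sin (2*θa) → δ ≤ u*Real.cos (2*θa) + v*Real.sin (2*θa) →
      δ ≤ 2*v*Real.sin (2*θb) → δ ≤ u*Real.cos (2*θb) + v*Real.sin (2*θb) →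
      ∀ w : ℂ, θa ≤ w.im → w.im ≤ θb → ‖F (Complex.exp w)‖ ≤ M := by
    intro θa θb hab habπ hsa hca hsb hcb w hwa hwb
    have bdry : ∀ θ : ℝ, δ ≤ 2*v*Real.sin (2*θ) → δ ≤ u*Real.cos (2*θ) + v*Real.sin (2*θ) →
        ∀ w' : ℂ, w'.im = θ → ‖F (Complex.exp w')‖ ≤ M := by
      intro θ hs hc w' hw'
      apply rayM
      · have h2 : (Complex.exp w')^2 = Complex.exp (2*w') := by
          rw [← Complex.exp_nat_mul]; norm_num
        rw [h2, Complex.exp_im, Complex.norm_exp]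
        have : Real.exp w'.re ^ 2 = Real.exp ((2*w').re) := by
          rw [← Real.exp_nat_mul]
          congr 1
          simp
        rw [this]
        have him : (2*w' : ℂ).im = 2*θ := by simp [hw']
        rw [him]
        have hepos : (0:ℝ) < Real.exp ((2*w').re) := Real.exp_pos _
        calc δ * Real.exp ((2*w').re) ≤ (2*v*Real.sin (2*θ)) * Real.exp ((2*w').re) :=
              mul_le_mul_of_nonneg_right hs hepos.le
          _ = 2*v*(Real.exp ((2*w').re) * Real.sin (2*θ)) := by ring
      · have h2 : (Complex.exp w')^2 = Complex.exp (2*w') := by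
          rw [← Complex.exp_nat_mul]; norm_num
        rw [h2, Complex.norm_exp]
        have : Real.exp w'.re ^ 2 = Real.exp ((2*w').re) := by
          rw [← Real.exp_nat_mul]
          congr 1
          simp
        rw [this]
        have hre : ((starRingEnd ℂ) α * Complex.exp (2*w')).re
            = u * (Real.exp ((2*w').re) * Real.cos (2*θ))
              + v * (Real.exp ((2*w').re) * Real.sin (2*θ)) := by
          rw [Complex.mul_re, Complex.exp_re, Complex.exp_im, Complex.conj_re, Complex.conj_im]
          have him : (2*w' : ℂ).im = 2*θ := by simp [hw']
          rw [him, hu, hvdef]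
          ring
        rw [hre]
        have hepos : (0:ℝ) < Real.exp ((2*w').re) := Real.exp_pos _
        calc δ * Real.exp ((2*w').re)
            ≤ (u*Real.cos (2*θ) + v*Real.sin (2*θ)) * Real.exp ((2*w').re) :=
              mul_le_mul_of_nonneg_right hc hepos.le
          _ = _ := by ring
    refine PhragmenLindelof.horizontal_strip (f := fun w => F (Complex.exp w))
      (a := θa) (b := θb) (C := M)
      ((hF.comp Complex.differentiable_exp).diffContOnCl) ?_ ?_ ?_ hwa hwb
    · refine ⟨1+ε, ?_, C, ?_⟩
      · have hπη : (0:ℝ) < Real.pi - η := by linarith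
        have h1 : Real.pi/(Real.pi-η) ≤ Real.pi/(θb-θa) :=
          div_le_div_of_nonneg_left hπ.le hab habπ
        have hεπ : ε * Real.pi ≤ η/2 := by
          calc ε * Real.pi ≤ η/(2*Real.pi) * Real.pi :=
                mul_le_mul_of_nonneg_right hεη hπ.le
            _ = η/2 := by field_simp
        have h2 : 1+ε < Real.pi/(Real.pi-η) := by
          rw [lt_div_iff₀ hπη]
          nlinarith
        linarith
      · rw [Asymptotics.isBigO_iff]
        refine ⟨C, Filter.Eventually.of_forall fun w' => ?_⟩
        have h1 : ‖F (Complex.exp w')‖ ≤ C * Real.exp (C * Real.exp ((1+ε) * |w'.re|)) := by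
          refine (hCF (Complex.exp w')).trans ?_
          rw [Complex.norm_exp, ← Real.exp_mul]
          have : Real.exp (w'.re * (1+ε)) ≤ Real.exp ((1+ε) * |w'.re|) := by
            apply Real.exp_le_exp.2
            rw [mul_comm]
            exact mul_le_mul_of_nonneg_left (le_abs_self _) (by linarith)
          gcongr
          all_goals linarith
        refine h1.trans ?_
        rw [Real.norm_eq_abs, Real.abs_exp]
    · exact fun w' hw' => bdry θa hsa hca w' hw'
    · exact fun w' hw' => bdry θb hsb hcb w' hw'
  -- trig facts
  have hcosη : Real.cos η ≥ 1/2 := by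
    have h1 : Real.cos (Real.pi/6) ≤ Real.cos η :=
      Real.cos_le_cos_of_nonneg_of_le_pi hη0.le (by linarith) hη6
    rw [Real.cos_pi_div_six] at h1
    have h3 : (1:ℝ) ≤ Real.sqrt 3 := by
      rw [show (1:ℝ) = Real.sqrt 1 by simp]
      exact Real.sqrt_le_sqrt (by norm_num)
    linarith
  have hsinη0 : 0 ≤ Real.sin η := Real.sin_nonneg_of_nonneg_of_le_pi hη0.le (by linarith)
  have hsinηη : Real.sin η ≤ η := Real.sin_le hη0.le
  have huη : |u| * η ≤ v/4 := by
    have h1 : |u| * η ≤ |u| * (v/(4*(|u|+1))) := mul_le_mul_of_nonneg_left hηu (abs_nonneg u)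
    have h2 : |u| * (v/(4*(|u|+1))) ≤ v/4 := by
      rw [mul_div_assoc', div_le_div_iff₀ (by positivity) (by norm_num)]
      nlinarith [abs_nonneg u, hv]
    linarith
  have husinη : |u * Real.sin η| ≤ v/4 := by
    rw [abs_mul]
    calc |u| * |Real.sin η| = |u| * Real.sin η := by rw [_root_.abs_of_nonneg hsinη0]
      _ ≤ |u| * η := mul_le_mul_of_nonneg_left hsinηη (abs_nonneg u)
      _ ≤ v/4 := huη
  set θ₁ : ℝ := Real.pi/4 - η/2 with hθ₁
  set θ₂ : ℝ := Real.pi/4 + η/2 with hθ₂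
  have c₁ : δ ≤ 2*v*Real.sin (2*θ₁) ∧ δ ≤ u*Real.cos (2*θ₁) + v*Real.sin (2*θ₁) := by
    have e2 : 2*θ₁ = Real.pi/2 - η := by rw [hθ₁]; ring
    rw [e2, Real.sin_pi_div_two_sub, Real.cos_pi_div_two_sub]
    constructor
    · rw [hδdef]; nlinarith
    · rw [hδdef]
      have := abs_le.1 husinη
      nlinarith
  have c₂ : δ ≤ 2*v*Real.sin (2*θ₂) ∧ δ ≤ u*Real.cos (2*θ₂) + v*Real.sin (2*θ₂) := by
    have e2 : 2*θ₂ = Real.pi/2 + η := by rw [hθ₂]; ring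
    have es : Real.sin (Real.pi/2 + η) = Real.cos η := by
      rw [Real.sin_add]; simp
    have ec : Real.cos (Real.pi/2 + η) = -Real.sin η := by
      rw [Real.cos_add]; simp
    rw [e2, es, ec]
    constructor
    · rw [hδdef]; nlinarith
    · rw [hδdef]
      have := abs_le.1 husinη
      nlinarith
  have shift : ∀ θ : ℝ, (δ ≤ 2*v*Real.sin (2*θ) ∧ δ ≤ u*Real.cos (2*θ) + v*Real.sin (2*θ)) →
      (δ ≤ 2*v*Real.sin (2*(θ+Real.pi)) ∧
        δ ≤ u*Real.cos (2*(θ+Real.pi)) + v*Real.sin (2*(θ+Real.pi))) := by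
    intro θ h
    have e : 2*(θ+Real.pi) = 2*θ + 2*Real.pi := by ring
    rw [e, Real.sin_add_two_pi, Real.cos_add_two_pi]
    exact h
  have c₁' := shift θ₁ c₁
  have c₂' := shift θ₂ c₂
  have c₁'' := shift (θ₁ + Real.pi) c₁'
  have hθ₁pos : 0 < θ₁ := by rw [hθ₁]; linarith
  have hθ₂pi : θ₂ ≤ Real.pi := by rw [hθ₂]; linarith
  have hηπ : η ≤ Real.pi - η := by linarith
  -- global boundedness
  have global : ∀ z : ℂ, ‖F z‖ ≤ max M (‖F 0‖) := by
    intro z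
    rcases eq_or_ne z 0 with rfl | hz
    · exact le_max_right _ _
    refine le_max_iff.2 (Or.inl ?_)
    set w : ℂ := Complex.log z with hw
    have hexp : Complex.exp w = z := Complex.exp_log hz
    have him1 : -Real.pi < w.im := Complex.neg_pi_lt_log_im z
    have him2 : w.im ≤ Real.pi := Complex.log_im_le_pi z
    by_cases h1 : θ₁ ≤ w.im
    · by_cases h2 : w.im ≤ θ₂
      · have := strip θ₁ θ₂ (by rw [hθ₁, hθ₂]; linarith)
          (by rw [hθ₁, hθ₂]; ring_nf; linarith [hηπ]) c₁.1 c₁.2 c₂.1 c₂.2 w h1 h2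
        rwa [hexp] at this
      · have := strip θ₂ (θ₁ + Real.pi) (by rw [hθ₁, hθ₂]; linarith)
          (by rw [hθ₁, hθ₂]; ring_nf; linarith)
          c₂.1 c₂.2 c₁'.1 c₁'.2 w (le_of_not_ge h2) (by linarith)
        rwa [hexp] at this
    · set w' : ℂ := w + 2*Real.pi*I with hw'
      have hexp' : Complex.exp w' = z := by
        rw [hw', Complex.exp_add, Complex.exp_two_pi_mul_I, mul_one, hexp]
      have him' : w'.im = w.im + 2*Real.pi := by
        rw [hw']
        simp
      have hlb : Real.pi < w'.im := by rw [him']; linarith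
      by_cases h3 : w'.im ≤ θ₁ + Real.pi
      · have := strip θ₂ (θ₁ + Real.pi) (by rw [hθ₁, hθ₂]; linarith)
          (by rw [hθ₁, hθ₂]; ring_nf; linarith)
          c₂.1 c₂.2 c₁'.1 c₁'.2 w' (by linarith) h3
        rwa [hexp'] at this
      · by_cases h4 : w'.im ≤ θ₂ + Real.pi
        · have := strip (θ₁ + Real.pi) (θ₂ + Real.pi) (by rw [hθ₁, hθ₂]; linarith)
            (by rw [hθ₁, hθ₂]; ring_nf; linarith [hηπ])
            c₁'.1 c₁'.2 c₂'.1 c₂'.2 w' (le_of_not_ge h3) h4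
          rwa [hexp'] at this
        · have := strip (θ₂ + Real.pi) (θ₁ + Real.pi + Real.pi) (by rw [hθ₁, hθ₂]; linarith)
            (by rw [hθ₁, hθ₂]; ring_nf; linarith)
            c₂'.1 c₂'.2 c₁''.1 c₁''.2 w' (le_of_not_ge h4)
            (by rw [him']; push_neg at h1; rw [hθ₁] at h1 ⊢; linarith)
          rwa [hexp'] at this
  -- Liouville's theorem
  have hbdd : Bornology.IsBounded (Set.range F) := by
    rw [isBounded_iff_forall_norm_le]
    exact ⟨max M (‖F 0‖), by rintro x ⟨z, rfl⟩; exact global z⟩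
  have hconst : ∀ z : ℂ, F z = F 0 := fun z => hF.apply_eq_apply_of_bounded hbdd z 0
  -- decay along the π/4 ray forces the constant to vanish
  obtain ⟨K₁, hK₁0, hK₁⟩ := rpow_tail C (δ/2) ε hC0 (by positivity) hε0 hε12
  have decay : ∀ x : ℝ, ‖F 0‖ ≤
      2*C*Real.exp K₁ * Real.exp (-(δ/2) * Real.exp (2*x)) := by
    intro x
    set z : ℂ := Complex.exp (x + (Real.pi/4)*I) with hz
    have habs : ‖z‖ = Real.exp x := by
      rw [hz, Complex.norm_exp]
      congr 1
      simp
    have hsq : z^2 = Complex.exp (2*x + (Real.pi/2)*I) := by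
      rw [hz, ← Complex.exp_nat_mul]
      norm_num
      ring_nf
    have him : (z^2).im = Real.exp (2*x) := by
      rw [hsq, Complex.exp_im]
      rw [show ((2:ℂ)*x + (Real.pi/2)*I) = ((2*x:ℝ):ℂ) + ((Real.pi/2:ℝ):ℂ)*I by
        push_cast; ring] at *
      simp [Real.sin_pi_div_two]
    have hre : (((starRingEnd ℂ) α) * z^2).re = v * Real.exp (2*x) := by
      rw [hsq, Complex.mul_re, Complex.exp_re, Complex.exp_im, Complex.conj_re, Complex.conj_im]
      rw [show ((2:ℂ)*x + (Real.pi/2)*I) = ((2*x:ℝ):ℂ) + ((Real.pi/2:ℝ):ℂ)*I by push_cast; ring]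
      simp [Real.sin_pi_div_two, Real.cos_pi_div_two, hvdef]
    have hr2 : ‖z‖ ^ 2 = Real.exp (2*x) := by
      rw [habs, ← Real.exp_nat_mul]
      norm_num
    have hray := ray z (by rw [him, hr2]; nlinarith [Real.exp_pos (2*x)])
      (by rw [hre, hr2]; nlinarith [Real.exp_pos (2*x)])
    rw [hconst z] at hray
    refine hray.trans ?_
    have hb := hK₁ (‖z‖) (norm_nonneg z)
    rw [hr2] at hb ⊢
    have : C * ‖z‖ ^ (1+ε) - δ * Real.exp (2*x)
        ≤ K₁ + (-(δ/2) * Real.exp (2*x)) := by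
      linarith
    calc 2*C*Real.exp (C * ‖z‖ ^ (1+ε) - δ * Real.exp (2*x))
        ≤ 2*C*Real.exp (K₁ + (-(δ/2) * Real.exp (2*x))) := by gcongr
      _ = 2*C*Real.exp K₁ * Real.exp (-(δ/2) * Real.exp (2*x)) := by
          rw [Real.exp_add]; ring
  have hlim : Filter.Tendsto (fun x : ℝ => 2*C*Real.exp K₁ * Real.exp (-(δ/2) * Real.exp (2*x)))
      Filter.atTop (nhds 0) := by
    have h1 : Filter.Tendsto (fun x : ℝ => Real.exp (2*x)) Filter.atTop Filter.atTop :=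
      Real.tendsto_exp_atTop.comp (Filter.tendsto_id.const_mul_atTop two_pos)
    have h2 : Filter.Tendsto (fun x : ℝ => -(δ/2) * Real.exp (2*x)) Filter.atTop Filter.atBot := by
      have := h1.const_mul_atTop (show (0:ℝ) < δ/2 by positivity)
      exact Filter.tendsto_neg_atTop_atBot.comp this |>.congr
        (fun x => by simp only [Function.comp_apply]; ring)
    have h3 := Real.tendsto_exp_atBot.comp h2
    have := h3.const_mul (2*C*Real.exp K₁)
    simpa using this
  have hF0 : ‖F 0‖ ≤ 0 :=
    ge_of_tendsto hlim (Filter.Eventually.of_forall decay)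
  have hF00 : F 0 = 0 :=
    norm_eq_zero.1 (le_antisymm hF0 (norm_nonneg (F 0)))
  intro z
  rw [hconst z, hF00]


set_option maxHeartbeats 1000000 in
/-- **Key identity step in the proof of Theorem 1** (equation (20) of the paper): if
entire functions `a, a', b` of order at most 1 with `b ≢ 0` satisfy
`b*·(a − a')·exp(conj α·z²) + b·(a* − a'*)·exp(α·z²) + s·(a*·a − a'*·a') = 0` for a
non-real `α` and `s ∈ {0,1}`, then `a = a'`. Here `f*(z) = conj (f (conj z))` is the
Schwarz reflection. -/
theorem key_identity_implies_equal
    (a a' b : ℂ → ℂ)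
    (ha : Differentiable ℂ a) (ha' : Differentiable ℂ a') (hb : Differentiable ℂ b)
    (haord : ∀ ε : ℝ, 0 < ε → ∃ C : ℝ, 0 < C ∧
      ∀ z : ℂ, ‖a z‖ ≤ C * Real.exp (‖z‖ ^ (1 + ε)))
    (ha'ord : ∀ ε : ℝ, 0 < ε → ∃ C : ℝ, 0 < C ∧
      ∀ z : ℂ, ‖a' z‖ ≤ C * Real.exp (‖z‖ ^ (1 + ε)))
    (hbord : ∀ ε : ℝ, 0 < ε → ∃ C : ℝ, 0 < C ∧
      ∀ z : ℂ, ‖b z‖ ≤ C * Real.exp (‖z‖ ^ (1 + ε)))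
    (hbne : b ≠ 0)
    (α : ℂ) (hα : α.im ≠ 0)
    (s : ℂ) (hs : s = 0 ∨ s = 1)
    (heq : ∀ z : ℂ,
      (starRingEnd ℂ) (b ((starRingEnd ℂ) z)) * (a z - a' z) * Complex.exp ((starRingEnd ℂ) α * z ^ 2)
      + b z * ((starRingEnd ℂ) (a ((starRingEnd ℂ) z)) - (starRingEnd ℂ) (a' ((starRingEnd ℂ) z)))
          * Complex.exp (α * z ^ 2)
      + s * ((starRingEnd ℂ) (a ((starRingEnd ℂ) z)) * a z
          - (starRingEnd ℂ) (a' ((starRingEnd ℂ) z)) * a' z) = 0) :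
    a = a' := by
  set F : ℂ → ℂ := fun z => (starRingEnd ℂ) (b ((starRingEnd ℂ) z)) * (a z - a' z) with hF
  set G : ℂ → ℂ := fun z => b z *
    ((starRingEnd ℂ) (a ((starRingEnd ℂ) z)) - (starRingEnd ℂ) (a' ((starRingEnd ℂ) z))) with hG
  set Kf : ℂ → ℂ := fun z => s * ((starRingEnd ℂ) (a ((starRingEnd ℂ) z)) * a z
      - (starRingEnd ℂ) (a' ((starRingEnd ℂ) z)) * a' z) with hKf
  have hsabs : ‖s‖ ≤ 1 := by rcases hs with rfl | rfl <;> simp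
  -- order bounds for F, G, Kf
  have hord : ∀ ε : ℝ, 0 < ε → ∃ C : ℝ, 0 < C ∧ ∀ z : ℂ,
      ‖F z‖ ≤ C * Real.exp (C * ‖z‖ ^ (1+ε)) ∧
      ‖G z‖ ≤ C * Real.exp (C * ‖z‖ ^ (1+ε)) ∧
      ‖Kf z‖ ≤ C * Real.exp (C * ‖z‖ ^ (1+ε)) := by
    intro ε hε
    obtain ⟨Ca, hCa0, hCa⟩ := haord ε hε
    obtain ⟨Ca', hCa'0, hCa'⟩ := ha'ord ε hε
    obtain ⟨Cb, hCb0, hCb⟩ := hbord ε hε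
    set C : ℝ := Cb*(Ca+Ca') + (Ca*Ca + Ca'*Ca') + 2 with hC
    have hC0 : 0 < C := by positivity
    have hC2 : 2 ≤ C := by nlinarith
    refine ⟨C, hC0, fun z => ?_⟩
    have hrpos : (0:ℝ) ≤ ‖z‖ ^ (1+ε) := Real.rpow_nonneg (norm_nonneg z) _
    have hexp2 : Real.exp (‖z‖ ^ (1+ε)) * Real.exp (‖z‖ ^ (1+ε))
        ≤ Real.exp (C * ‖z‖ ^ (1+ε)) := by
      rw [← Real.exp_add]
      apply Real.exp_le_exp.2
      nlinarith
    have habsconj : ‖(starRingEnd ℂ) z‖ = ‖z‖ := Complex.norm_conj z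
    have haz := hCa z
    have ha'z := hCa' z
    have hbz := hCb z
    have hazc := hCa ((starRingEnd ℂ) z)
    have ha'zc := hCa' ((starRingEnd ℂ) z)
    have hbzc := hCb ((starRingEnd ℂ) z)
    rw [habsconj] at hazc ha'zc hbzc
    have hexppos : (0:ℝ) < Real.exp (‖z‖ ^ (1+ε)) := Real.exp_pos _
    refine ⟨?_, ?_, ?_⟩
    · have h1 : ‖F z‖ ≤
          (Cb * Real.exp (‖z‖ ^ (1+ε))) * ((Ca+Ca') * Real.exp (‖z‖ ^ (1+ε))) := by
        rw [hF]
        simp only [norm_mul]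
        rw [Complex.norm_conj]
        have hd : ‖a z - a' z‖ ≤ (Ca+Ca') * Real.exp (‖z‖ ^ (1+ε)) := by
          calc ‖a z - a' z‖ ≤ ‖a z‖ + ‖a' z‖ :=
                norm_sub_le _ _
            _ ≤ _ := by rw [add_mul]; exact add_le_add haz ha'z
        exact mul_le_mul hbzc hd (norm_nonneg _) (by positivity)
      refine h1.trans ?_
      calc (Cb * Real.exp (‖z‖ ^ (1+ε))) * ((Ca+Ca') * Real.exp (‖z‖ ^ (1+ε)))
          = (Cb*(Ca+Ca')) * (Real.exp (‖z‖ ^ (1+ε)) * Real.exp (‖z‖ ^ (1+ε))) := by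
            ring
        _ ≤ C * Real.exp (C * ‖z‖ ^ (1+ε)) := by
            apply mul_le_mul _ hexp2 (by positivity) hC0.le
            nlinarith
    · have h1 : ‖G z‖ ≤
          (Cb * Real.exp (‖z‖ ^ (1+ε))) * ((Ca+Ca') * Real.exp (‖z‖ ^ (1+ε))) := by
        rw [hG]
        simp only [norm_mul]
        have hd : ‖(starRingEnd ℂ) (a ((starRingEnd ℂ) z))
            - (starRingEnd ℂ) (a' ((starRingEnd ℂ) z))‖
            ≤ (Ca+Ca') * Real.exp (‖z‖ ^ (1+ε)) := by
          calc ‖_‖ ≤ ‖(starRingEnd ℂ) (a ((starRingEnd ℂ) z))‖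
                + ‖(starRingEnd ℂ) (a' ((starRingEnd ℂ) z))‖ :=
                norm_sub_le _ _
            _ = ‖a ((starRingEnd ℂ) z)‖ + ‖a' ((starRingEnd ℂ) z)‖ := by
                rw [Complex.norm_conj, Complex.norm_conj]
            _ ≤ _ := by rw [add_mul]; exact add_le_add hazc ha'zc
        exact mul_le_mul hbz hd (norm_nonneg _) (by positivity)
      refine h1.trans ?_
      calc (Cb * Real.exp (‖z‖ ^ (1+ε))) * ((Ca+Ca') * Real.exp (‖z‖ ^ (1+ε)))
          = (Cb*(Ca+Ca')) * (Real.exp (‖z‖ ^ (1+ε)) * Real.exp (‖z‖ ^ (1+ε))) := by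
            ring
        _ ≤ C * Real.exp (C * ‖z‖ ^ (1+ε)) := by
            apply mul_le_mul _ hexp2 (by positivity) hC0.le
            nlinarith
    · have h2 : ‖(starRingEnd ℂ) (a ((starRingEnd ℂ) z)) * a z
          - (starRingEnd ℂ) (a' ((starRingEnd ℂ) z)) * a' z‖
          ≤ (Ca*Ca + Ca'*Ca') * (Real.exp (‖z‖ ^ (1+ε)) * Real.exp (‖z‖ ^ (1+ε))) := by
        calc ‖(starRingEnd ℂ) (a ((starRingEnd ℂ) z)) * a z
            - (starRingEnd ℂ) (a' ((starRingEnd ℂ) z)) * a' z‖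
            ≤ ‖(starRingEnd ℂ) (a ((starRingEnd ℂ) z)) * a z‖
              + ‖(starRingEnd ℂ) (a' ((starRingEnd ℂ) z)) * a' z‖ :=
              norm_sub_le _ _
          _ = ‖a ((starRingEnd ℂ) z)‖ * ‖a z‖
              + ‖a' ((starRingEnd ℂ) z)‖ * ‖a' z‖ := by
              rw [norm_mul, norm_mul, Complex.norm_conj, Complex.norm_conj]
          _ ≤ (Ca * Real.exp (‖z‖ ^ (1+ε))) * (Ca * Real.exp (‖z‖ ^ (1+ε)))
              + (Ca' * Real.exp (‖z‖ ^ (1+ε))) * (Ca' * Real.exp (‖z‖ ^ (1+ε))) :=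
              add_le_add
                (mul_le_mul hazc haz (norm_nonneg _) (by positivity))
                (mul_le_mul ha'zc ha'z (norm_nonneg _) (by positivity))
          _ = (Ca*Ca + Ca'*Ca') * (Real.exp (‖z‖ ^ (1+ε)) * Real.exp (‖z‖ ^ (1+ε))) := by
              ring
      have h3 : ‖Kf z‖ = ‖s‖ *
          ‖(starRingEnd ℂ) (a ((starRingEnd ℂ) z)) * a z
            - (starRingEnd ℂ) (a' ((starRingEnd ℂ) z)) * a' z‖ := by
        rw [hKf]
        exact norm_mul _ _
      have h1 : ‖Kf z‖ ≤
          (Ca*Ca + Ca'*Ca') * (Real.exp (‖z‖ ^ (1+ε)) * Real.exp (‖z‖ ^ (1+ε))) := by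
        rw [h3]
        have := mul_le_mul hsabs h2 (norm_nonneg _) (by norm_num : (0:ℝ) ≤ 1)
        linarith
      refine h1.trans ?_
      apply mul_le_mul _ hexp2 (by positivity) hC0.le
      nlinarith
  have hFdiff : Differentiable ℂ F := (reflDiff hb).mul (ha.sub ha')
  have hdcont : Continuous (fun z => a z - a' z) := (ha.sub ha').continuous
  by_contra hne
  obtain ⟨z₁, hz₁⟩ : ∃ z₁, a z₁ ≠ a' z₁ := by
    by_contra h
    push_neg at h
    exact hne (funext h)
  have hbzero : ∀ z, b z = 0 := by
    rcases lt_or_gt_of_ne hα with hneg | hpos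
    · -- Im α < 0 : apply aux_zero with conj α and the roles of F and G exchanged
      have hGdiff : Differentiable ℂ G :=
        hb.mul ((reflDiff ha).sub (reflDiff ha'))
      have hord' : ∀ ε : ℝ, 0 < ε → ∃ C : ℝ, 0 < C ∧ ∀ z : ℂ,
          ‖G z‖ ≤ C * Real.exp (C * ‖z‖ ^ (1+ε)) ∧
          ‖F z‖ ≤ C * Real.exp (C * ‖z‖ ^ (1+ε)) ∧
          ‖Kf z‖ ≤ C * Real.exp (C * ‖z‖ ^ (1+ε)) := by
        intro ε hε
        obtain ⟨C, hC0, h⟩ := hord ε hε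
        exact ⟨C, hC0, fun z => ⟨(h z).2.1, (h z).1, (h z).2.2⟩⟩
      have hv' : 0 < ((starRingEnd ℂ) α).im := by
        rw [Complex.conj_im]; linarith
      have heq' : ∀ z : ℂ, G z * Complex.exp ((starRingEnd ℂ) ((starRingEnd ℂ) α) * z^2)
          + F z * Complex.exp (((starRingEnd ℂ) α) * z^2) + Kf z = 0 := by
        intro z
        rw [Complex.conj_conj]
        linear_combination heq z
      have hG0 := aux_zero G F Kf hGdiff hord' ((starRingEnd ℂ) α) hv' heq'
      -- G ≡ 0 and the reflected difference is nonzero at conj z₁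
      have hdstar : Continuous (fun z => (starRingEnd ℂ) (a ((starRingEnd ℂ) z))
          - (starRingEnd ℂ) (a' ((starRingEnd ℂ) z))) := by
        apply Continuous.sub
        · exact Complex.continuous_conj.comp (ha.continuous.comp Complex.continuous_conj)
        · exact Complex.continuous_conj.comp (ha'.continuous.comp Complex.continuous_conj)
      have hne' : (starRingEnd ℂ) (a ((starRingEnd ℂ) ((starRingEnd ℂ) z₁)))
          - (starRingEnd ℂ) (a' ((starRingEnd ℂ) ((starRingEnd ℂ) z₁))) ≠ 0 := by
        simp only [Complex.conj_conj]
        rw [← map_sub]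
        intro hc
        exact sub_ne_zero.2 hz₁ ((starRingEnd ℂ).injective (hc.trans (map_zero _).symm))
      exact mul_zero_forall hb hdstar hG0 (z₁ := (starRingEnd ℂ) z₁) hne'
    · -- Im α > 0 : direct application
      have hF0 := aux_zero F G Kf hFdiff hord α hpos (fun z => by linear_combination heq z)
      have hne' : (fun z => a z - a' z) z₁ ≠ 0 := sub_ne_zero.2 hz₁
      have hbstar0 := mul_zero_forall (reflDiff hb) hdcont hF0 hne'
      intro z
      have := hbstar0 ((starRingEnd ℂ) z)
      simp only [Complex.conj_conj] at this
      exact (starRingEnd ℂ).injective (this.trans (map_zero _).symm)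
  exact hbne (funext hbzero)
end

section
/- Let h : ℝ → ℂ be integrable with compact support, and suppose that its Fourier transform 𝓕h vanishes on some nonempty open set U ⊆ ℝ, i.e. 𝓕h(ξ) = 0 for all ξ ∈ U. Then h = 0 almost everywhere. -/
open MeasureTheory

open Real Complex Filter Set Topology FourierTransform in
/-- Auxiliary: from the vanishing of the Fourier transform everywhere on `ℝ`, conclude that
the function is a.e. zero, by testing against Schwartz functions. -/
theorem aux_ae_zero_of_fourier_zero
    (h : ℝ → ℂ) (hint : Integrable h)
    (hFT : ∀ ξ : ℝ, FourierTransform.fourier h ξ = 0) :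
    h =ᵐ[volume] 0 := by
  have flip_eq : (innerₗ ℝ).flip = innerₗ ℝ := by
    refine LinearMap.ext fun x => LinearMap.ext fun y => ?_
    simpa using real_inner_comm x y
  have main : ∀ (g : ℝ → ℝ), ContDiff ℝ (⊤ : ℕ∞) g → HasCompactSupport g →
      ∫ x, g x • h x = 0 := by
    intro g g_diff g_supp
    -- build the Schwartz map with values `(g x : ℂ)`
    have Gsupp : HasCompactSupport (fun x : ℝ => (g x : ℂ)) :=
      g_supp.comp_left (g := fun r : ℝ => (r : ℂ)) (by simp)
    have Gsmooth : ContDiff ℝ (⊤ : ℕ∞) (fun x : ℝ => (g x : ℂ)) :=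
      Complex.ofRealCLM.contDiff.comp g_diff
    let G : SchwartzMap ℝ ℂ :=
      { toFun := fun x => (g x : ℂ)
        smooth' := Gsmooth
        decay' := by
          intro k n
          have hcont : Continuous fun x : ℝ =>
              ‖x‖ ^ k * ‖iteratedFDeriv ℝ n (fun x : ℝ => (g x : ℂ)) x‖ := by
            exact ((continuous_norm.pow k).mul
              ((Gsmooth.continuous_iteratedFDeriv (by exact_mod_cast le_top)).norm))
          have hsupp2 : HasCompactSupport fun x : ℝ =>
              ‖x‖ ^ k * ‖iteratedFDeriv ℝ n (fun x : ℝ => (g x : ℂ)) x‖ :=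
            ((Gsupp.iteratedFDeriv n).norm).mul_left
          obtain ⟨C, hC⟩ := hcont.bounded_above_of_compact_support hsupp2
          exact ⟨C, fun x => (le_abs_self _).trans ((Real.norm_eq_abs _) ▸ hC x)⟩ }
    set ψ : SchwartzMap ℝ ℂ := (SchwartzMap.fourierTransformCLE ℂ (SchwartzMap ℝ ℂ)).symm G with hψ
    have hψFT : FourierTransform.fourier (⇑ψ) = ⇑G := by
      have := (SchwartzMap.fourierTransformCLE ℂ (SchwartzMap ℝ ℂ)).apply_symm_apply G
      have h2 : ⇑((SchwartzMap.fourierTransformCLE ℂ (SchwartzMap ℝ ℂ)) ψ) = FourierTransform.fourier (⇑ψ) := rfl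
      rw [← h2, this]
    have key := VectorFourier.integral_fourierIntegral_smul_eq_flip (L := innerₗ ℝ) (μ := volume) (ν := volume)
      Real.continuous_fourierChar continuous_inner hint ψ.integrable
    rw [flip_eq] at key
    have hLHS : (∫ ξ, (FourierTransform.fourier h ξ) • (ψ ξ)) = 0 := by
      simp [hFT]
    have key' : (∫ ξ, FourierTransform.fourier h ξ • ψ ξ)
        = ∫ x, h x • FourierTransform.fourier (⇑ψ) x := key
    have key2 : (∫ x, h x • (FourierTransform.fourier (⇑ψ) x)) = 0 := by
      rw [← key']
      exact hLHS
    rw [hψFT] at key2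
    have : (∫ x, g x • h x) = ∫ x, h x • G x := by
      congr 1 with x
      show (g x : ℂ) * h x = h x * (g x : ℂ)
      ring
    rw [this, key2]
  have := ae_eq_zero_of_integral_contDiff_smul_eq_zero hint.locallyIntegrable
    (fun g hg hgs => main g hg hgs)
  filter_upwards [this] with x hx using hx

set_option maxHeartbeats 1000000 in
/-- **Fourier transform of a compactly supported integrable function vanishing on an open
set forces the function to vanish** (consequence of Paley–Wiener analyticity, underlying
the restriction to arbitrary open data sets in Theorem 1 of the paper). -/
theorem fourier_vanishing_open_set
    (h : ℝ → ℂ) (hint : Integrable h) (hsupp : HasCompactSupport h)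
    (U : Set ℝ) (hU : IsOpen U) (hUne : U.Nonempty)
    (hvanish : ∀ ξ ∈ U, FourierTransform.fourier h ξ = 0) :
    h =ᵐ[volume] 0 := by
  classical
  -- radius of the support
  obtain ⟨R, hR0, hRsupp⟩ : ∃ R, 0 < R ∧ tsupport h ⊆ Metric.closedBall 0 R := by
    obtain ⟨R, hR0, hR⟩ := hsupp.isBounded.subset_closedBall_lt 0 0
    exact ⟨R, hR0, hR⟩
  have habs : ∀ x : ℝ, h x ≠ 0 → |x| ≤ R := by
    intro x hx
    have : x ∈ tsupport h := subset_tsupport h (by simpa using hx)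
    simpa [Real.norm_eq_abs] using hRsupp this
  -- the entire extension of the Fourier transform
  set c : ℝ → ℂ := fun x => ((-2 * Real.pi * x : ℝ) : ℂ) * Complex.I with hc
  set F : ℂ → ℂ := fun z => ∫ x : ℝ, Complex.exp (c x * z) * h x with hF
  have hnorm_exp : ∀ (x : ℝ) (z : ℂ), ‖Complex.exp (c x * z)‖
      = Real.exp (2 * Real.pi * x * z.im) := by
    intro x z
    rw [Complex.norm_exp]
    congr 1
    simp [hc, Complex.mul_re]
    try ring
  have hccont : Continuous c := by
    simp only [hc]
    fun_prop
  have hmeas : ∀ z : ℂ, AEStronglyMeasurable (fun x : ℝ => Complex.exp (c x * z)) volume :=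
    fun z => (Complex.continuous_exp.comp (hccont.mul continuous_const)).aestronglyMeasurable
  have hmeasc : AEStronglyMeasurable c volume := hccont.aestronglyMeasurable
  -- F is differentiable everywhere
  have hdiff : Differentiable ℂ F := by
    intro z₀
    have hbound_nonneg : (0:ℝ) ≤ 2 * Real.pi * R * Real.exp (2 * Real.pi * R * (‖z₀‖ + 1)) := by
      positivity
    have := hasDerivAt_integral_of_dominated_loc_of_deriv_le
      (F := fun (z : ℂ) (x : ℝ) => Complex.exp (c x * z) * h x)
      (F' := fun (z : ℂ) (x : ℝ) => (Complex.exp (c x * z) * c x) * h x)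
      (x₀ := z₀) (s := Metric.ball z₀ 1) (μ := volume) (Metric.ball_mem_nhds z₀ one_pos)
      (bound := fun x : ℝ => (2 * Real.pi * R * Real.exp (2 * Real.pi * R * (‖z₀‖ + 1))) * ‖h x‖)
      ?_ ?_ ?_ ?_ ?_ ?_
    · exact this.2.differentiableAt
    · filter_upwards with z
      exact (hmeas z).mul hint.1
    · -- integrability at z₀
      apply Integrable.mono' (hint.norm.const_mul (Real.exp (2 * Real.pi * R * ‖z₀‖)))
      · exact (hmeas z₀).mul hint.1
      · filter_upwards with x
        rcases eq_or_ne (h x) 0 with hx | hx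
        · simp [hx]
        · have hxR := habs x hx
          rw [norm_mul, hnorm_exp]
          apply mul_le_mul_of_nonneg_right _ (norm_nonneg _)
          rw [Real.exp_le_exp]
          calc 2 * Real.pi * x * z₀.im ≤ |2 * Real.pi * x * z₀.im| := le_abs_self _
            _ = 2 * Real.pi * |x| * |z₀.im| := by
                rw [abs_mul, abs_mul]
                have : |(2:ℝ) * Real.pi| = 2 * Real.pi := abs_of_pos (by positivity)
                rw [this]
            _ ≤ 2 * Real.pi * R * ‖z₀‖ := by
                refine mul_le_mul (mul_le_mul_of_nonneg_left hxR (by positivity))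
                  ?_ (abs_nonneg _) (by positivity)
                exact Complex.abs_im_le_norm z₀
    · exact ((hmeas z₀).mul hmeasc).mul hint.1
    · -- bound on the ball
      filter_upwards with x
      intro z hz
      rcases eq_or_ne (h x) 0 with hx | hx
      · simp [hx]
      · have hxR := habs x hx
        have hexp_pos := Real.exp_pos (2 * Real.pi * x * z.im)
        rw [norm_mul, norm_mul, hnorm_exp]
        have hcx : ‖c x‖ = 2 * Real.pi * |x| := by
          simp only [hc, norm_mul, Complex.norm_real, Complex.norm_I, mul_one,
            abs_mul]
          simp [abs_of_pos Real.pi_pos]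
          try ring
        rw [hcx]
        have hzb : ‖z‖ ≤ ‖z₀‖ + 1 := by
          have := mem_ball_iff_norm.mp hz
          calc ‖z‖ = ‖z₀ + (z - z₀)‖ := by ring_nf
            _ ≤ ‖z₀‖ + ‖z - z₀‖ := norm_add_le _ _
            _ ≤ ‖z₀‖ + 1 := by linarith
        have h1 : Real.exp (2 * Real.pi * x * z.im) ≤
            Real.exp (2 * Real.pi * R * (‖z₀‖ + 1)) := by
          rw [Real.exp_le_exp]
          calc 2 * Real.pi * x * z.im ≤ |2 * Real.pi * x * z.im| := le_abs_self _
            _ = 2 * Real.pi * |x| * |z.im| := by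
                rw [abs_mul, abs_mul]
                have : |(2:ℝ) * Real.pi| = 2 * Real.pi := abs_of_pos (by positivity)
                rw [this]
            _ ≤ 2 * Real.pi * R * (‖z₀‖ + 1) := by
                refine mul_le_mul (mul_le_mul_of_nonneg_left hxR (by positivity))
                  ?_ (abs_nonneg _) (by positivity)
                refine le_trans ?_ hzb
                exact Complex.abs_im_le_norm z
        calc Real.exp (2 * Real.pi * x * z.im) * (2 * Real.pi * |x|) * ‖h x‖
            ≤ Real.exp (2 * Real.pi * R * (‖z₀‖ + 1)) * (2 * Real.pi * R) * ‖h x‖ := by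
              apply mul_le_mul_of_nonneg_right _ (norm_nonneg _)
              exact mul_le_mul h1 (mul_le_mul_of_nonneg_left hxR (by positivity))
                (by positivity) (Real.exp_pos _).le
            _ = 2 * Real.pi * R * Real.exp (2 * Real.pi * R * (‖z₀‖ + 1)) * ‖h x‖ := by ring
    · exact hint.norm.const_mul _
    · -- differentiability of the integrand
      filter_upwards with x
      intro z hz
      have : HasDerivAt (fun z : ℂ => Complex.exp (c x * z)) (Complex.exp (c x * z) * c x) z := by
        simpa using ((hasDerivAt_id z).const_mul (c x)).cexp
      exact this.mul_const (h x)
  -- F agrees with the Fourier transform on the reals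
  have hreal : ∀ ξ : ℝ, F ξ = FourierTransform.fourier h ξ := by
    intro ξ
    rw [hF]
    simp only [hc]
    rw [Real.fourier_real_eq_integral_exp_smul]
    congr 1 with x
    rw [smul_eq_mul]
    congr 1
    congr 1
    push_cast [hc]
    ring
  -- F vanishes identically by the identity theorem
  have hanalytic : AnalyticOnNhd ℂ F Set.univ := by
    rw [← Complex.analyticOnNhd_univ_iff_differentiable] at hdiff
    exact hdiff
  obtain ⟨ξ₀, hξ₀⟩ := hUne
  obtain ⟨ε, hε0, hball⟩ := Metric.isOpen_iff.mp hU ξ₀ hξ₀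
  have humem : ∀ n : ℕ, (ξ₀ + ε / (2 * (n + 1))) ∈ U := by
    intro n
    apply hball
    rw [Metric.mem_ball, Real.dist_eq]
    have hpos : (0:ℝ) < ε / (2 * (n + 1)) := by positivity
    rw [abs_of_pos (by linarith [hpos] : (0:ℝ) < ξ₀ + ε / (2 * (n + 1)) - ξ₀)]
    have : ε / (2 * ((n:ℝ) + 1)) ≤ ε / 2 := by
      apply div_le_div_of_nonneg_left hε0.le (by norm_num)
      have : (1:ℝ) ≤ (n:ℝ) + 1 := by
        have := Nat.cast_nonneg (α := ℝ) n
        linarith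
      linarith
    linarith
  have hfreq : ∃ᶠ z in nhdsWithin (ξ₀ : ℂ) {(ξ₀ : ℂ)}ᶜ, F z = 0 := by
    have htend : Filter.Tendsto (fun n : ℕ => ((ξ₀ + ε / (2 * (n + 1)) : ℝ) : ℂ))
        Filter.atTop (nhdsWithin (ξ₀ : ℂ) {(ξ₀ : ℂ)}ᶜ) := by
      rw [tendsto_nhdsWithin_iff]
      constructor
      · apply Filter.Tendsto.comp Complex.continuous_ofReal.continuousAt
        have : Filter.Tendsto (fun n : ℕ => ε / (2 * ((n:ℝ) + 1))) Filter.atTop (nhds 0) := by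
          apply Filter.Tendsto.const_div_atTop
          apply Filter.Tendsto.const_mul_atTop (by norm_num : (0:ℝ) < 2)
          exact tendsto_natCast_atTop_atTop.atTop_add tendsto_const_nhds
        have h2 := this.const_add ξ₀
        simpa using h2
      · filter_upwards with n
        simp only [Set.mem_compl_iff, Set.mem_singleton_iff]
        intro hcontra
        have : ξ₀ + ε / (2 * ((n:ℝ) + 1)) = ξ₀ := by exact_mod_cast hcontra
        have hpos : (0:ℝ) < ε / (2 * ((n:ℝ) + 1)) := by positivity
        linarith
    apply htend.frequently
    apply Filter.Frequently.of_forall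
    intro n
    rw [hreal]
    exact hvanish _ (humem n)
  have hFzero : Set.EqOn F 0 Set.univ :=
    hanalytic.eqOn_zero_of_preconnected_of_frequently_eq_zero isPreconnected_univ
      (Set.mem_univ _) hfreq
  have hFT : ∀ ξ : ℝ, FourierTransform.fourier h ξ = 0 := by
    intro ξ
    rw [← hreal]
    exact hFzero (Set.mem_univ _)
  exact aux_ae_zero_of_fourier_zero h hint hFT
end
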